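/- arXiv:2510.06947 — 2 statements merged into one kernel-verified Lean document; each statement's English description precedes it below -/
import Mathlib

section
/- For even n > 2 and 0 ≤ i ≤ n with i ≠ n/2, the Dicke state |D_n^i⟩ (the normalized uniform superposition of all n-qubit computational basis states with exactly i ones) satisfies: the probability of measuring |1⟩ at any fixed qubit position p equals i/n. Consequently, this probability is < 1/2 when i < n/2 and > 1/2 when i > n/2, so Dicke states solve the density classification task. -/
open Finset

/-- **Dicke states solve the density classification task.**
For even `n > 2`, `i ≤ n`, `i ≠ n/2`, the Dicke state `|D_n^i⟩` (uniform superposition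
of all computational basis states of `n` qubits with exactly `i` ones, with amplitude
`1/√(C(n,i))`) has probability exactly `i/n` of yielding outcome `1` when qubit `p`
is measured; hence this probability is `< 1/2` when `i < n/2` and `> 1/2` when `i > n/2`. -/
theorem dicke_states_solve_dct
    (n i : ℕ) (hn : Even n) (hn2 : 2 < n) (hi : i ≤ n) (hne : i ≠ n / 2)
    (p : Fin n)
    (weight : (Fin n → Bool) → ℕ)
    (hweight : ∀ b, weight b = (Finset.univ.filter (fun j => b j = true)).card)
    (dicke : (Fin n → Bool) → ℂ)
    (hdicke : ∀ b, dicke b =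
      if weight b = i then (1 / Real.sqrt (n.choose i) : ℂ) else 0) :
    (∑ b ∈ Finset.univ.filter (fun b : Fin n → Bool => b p = true),
        ‖dicke b‖ ^ 2) = (i : ℝ) / n
    ∧ (i < n / 2 →
        (∑ b ∈ Finset.univ.filter (fun b : Fin n → Bool => b p = true),
          ‖dicke b‖ ^ 2) < 1 / 2)
    ∧ (n / 2 < i →
        (1 : ℝ) / 2 < ∑ b ∈ Finset.univ.filter (fun b : Fin n → Bool => b p = true),
          ‖dicke b‖ ^ 2) := by
  have hn0 : 0 < n := by omega
  have hc0 : 0 < n.choose i := Nat.choose_pos hi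
  have hterm : ∀ b : Fin n → Bool, ‖dicke b‖ ^ 2 =
      if weight b = i then (1 : ℝ) / n.choose i else 0 := by
    intro b
    rw [hdicke b]
    split
    · rw [norm_div, norm_one, Complex.norm_real, Real.norm_eq_abs, abs_of_nonneg (Real.sqrt_nonneg _),
        div_pow, one_pow, Real.sq_sqrt (by positivity)]
    · simp
  have hsum : (∑ b ∈ Finset.univ.filter (fun b : Fin n → Bool => b p = true),
        ‖dicke b‖ ^ 2) =
      (Finset.univ.filter (fun b : Fin n → Bool => b p = true ∧ weight b = i)).card
        * ((1 : ℝ) / n.choose i) := by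
    simp_rw [hterm]
    rw [← Finset.sum_filter, Finset.filter_filter, Finset.sum_const, nsmul_eq_mul]
  have hcard : (Finset.univ.filter
      (fun b : Fin n → Bool => b p = true ∧ weight b = i)).card
      = if i = 0 then 0 else (n-1).choose (i-1) := by
    split
    · next h0 =>
      subst h0
      rw [Finset.card_eq_zero, Finset.filter_eq_empty_iff]
      rintro b -
      rw [hweight]
      intro ⟨hb1, hb2⟩
      have : p ∈ Finset.univ.filter (fun j => b j = true) := by
        simp [hb1]
      rw [Finset.card_eq_zero.mp hb2] at this
      simp at this
    · next h0 =>
      have hi1 : 1 ≤ i := Nat.one_le_iff_ne_zero.mpr h0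
      have hce : (Finset.univ.erase p).card = n - 1 := by
        rw [Finset.card_erase_of_mem (Finset.mem_univ p), Finset.card_univ, Fintype.card_fin]
      rw [← hce, ← Finset.card_powersetCard]
      apply Finset.card_bij' (fun b _ => (Finset.univ.filter (fun j => b j = true)).erase p)
        (fun s _ => fun j => decide (j = p ∨ j ∈ s))
      · intro b hb
        rw [Finset.mem_filter] at hb
        obtain ⟨-, hb1, hb2⟩ := hb
        rw [Finset.mem_powersetCard]
        constructor
        · intro j hj
          rw [Finset.mem_erase] at hj ⊢
          exact ⟨hj.1, Finset.mem_univ j⟩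
        · rw [Finset.card_erase_of_mem (by simp [hb1]), ← hweight, hb2]
      · intro s hs
        rw [Finset.mem_powersetCard] at hs
        obtain ⟨hs1, hs2⟩ := hs
        have hps : p ∉ s := fun h => by simpa using (hs1 h)
        have hfilt : Finset.univ.filter (fun j => decide (j = p ∨ j ∈ s) = true)
            = insert p s := by
          ext j
          simp [decide_eq_true_eq]
        rw [Finset.mem_filter]
        refine ⟨Finset.mem_univ _, by simp, ?_⟩
        rw [hweight, hfilt, Finset.card_insert_of_notMem hps, hs2]
        omega
      · intro b hb
        rw [Finset.mem_filter] at hb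
        obtain ⟨-, hb1, -⟩ := hb
        funext j
        by_cases hj : j = p
        · subst hj; simp [hb1]
        · simp [hj]
      · intro s hs
        rw [Finset.mem_powersetCard] at hs
        obtain ⟨hs1, hs2⟩ := hs
        have hps : p ∉ s := fun h => by simpa using (hs1 h)
        have hfilt : Finset.univ.filter (fun j => decide (j = p ∨ j ∈ s) = true)
            = insert p s := by
          ext j
          simp [decide_eq_true_eq]
        rw [hfilt, Finset.erase_insert hps]
  have key : (∑ b ∈ Finset.univ.filter (fun b : Fin n → Bool => b p = true),
        ‖dicke b‖ ^ 2) = (i : ℝ) / n := by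
    rw [hsum, hcard]
    split
    · next h0 => subst h0; simp
    · next h0 =>
      have hi1 : 1 ≤ i := Nat.one_le_iff_ne_zero.mpr h0
      have hnat : (n-1).choose (i-1) * n = i * n.choose i := by
        have := Nat.add_one_mul_choose_eq (n-1) (i-1)
        have h1 : (n-1).succ = n := by clear hsum hcard; omega
        have h2 : (i-1).succ = i := by clear hsum hcard; omega
        simp only [Nat.succ_eq_add_one] at h1 h2
        rw [h1, h2] at this
        rw [Nat.mul_comm ((n-1).choose (i-1)) n, this, Nat.mul_comm]
      rw [mul_one_div, div_eq_div_iff (by positivity) (by positivity)]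
      exact_mod_cast hnat
  refine ⟨key, ?_, ?_⟩
  · intro h
    rw [key, div_lt_div_iff₀ (by positivity) (by norm_num)]
    have h2i : i * 2 < n := by clear hsum hcard key; omega
    have : (i : ℝ) * 2 < n := by exact_mod_cast h2i
    linarith
  · intro h
    rw [key, div_lt_div_iff₀ (by norm_num) (by positivity)]
    have h2i : n < i * 2 := by clear hsum hcard key; omega
    have : (n : ℝ) < i * 2 := by exact_mod_cast h2i
    linarith
end

section
/- Let A_e = I_{n/2} ⊗ [[a₁,b₁],[−b₁*,a₁*]] and A_o = X_n A X_n† with A = I_{n/2} ⊗ [[a₂,b₂],[−b₂*,a₂*]], where n is even and X_n is the cyclic shift. Then the product 𝔸 = A_o A_e is block-diagonalized by the Fourier transform: 𝔸^t = (F_{n/2} ⊗ I₂)[Σ_{k=0}^{n/2−1} |k⟩⟨k| ⊗ M(k)^t](F_{n/2}† ⊗ I₂), where M(k) = [[a₂* a₁ + b₂* b₁* e^{−4πik/n}, a₂* b₁ − b₂* a₁* e^{−4πik/n}],[a₁ b₂ e^{4πik/n} − a₂ b₁*, b₂ b₁ e^{4πik/n} + a₂ a₁*]]. -/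
open Matrix Kronecker

lemma expsum (m : ℕ) (hm : 0 < m) (d : ℤ) :
    ∑ k : Fin m, Complex.exp (2 * Real.pi * Complex.I * d * k / m)
      = if (m : ℤ) ∣ d then (m : ℂ) else 0 := by
  have hm' : (m : ℂ) ≠ 0 := Nat.cast_ne_zero.mpr hm.ne'
  have hterm : ∀ k : ℕ, Complex.exp (2 * Real.pi * Complex.I * d * k / m)
      = Complex.exp (2 * Real.pi * Complex.I * d / m) ^ k := by
    intro k
    rw [← Complex.exp_nat_mul]
    congr 1
    field_simp
  have hsum : ∑ k : Fin m, Complex.exp (2 * Real.pi * Complex.I * d * k / m)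
      = ∑ k ∈ Finset.range m, Complex.exp (2 * Real.pi * Complex.I * d / m) ^ k := by
    rw [← Fin.sum_univ_eq_sum_range (fun k => Complex.exp (2 * Real.pi * Complex.I * d / m) ^ k)]
    exact Finset.sum_congr rfl (fun k _ => hterm k)
  rw [hsum]
  by_cases hdvd : (m : ℤ) ∣ d
  · obtain ⟨c, rfl⟩ := hdvd
    have h1 : Complex.exp (2 * Real.pi * Complex.I * ((m : ℤ) * c : ℤ) / m) = 1 := by
      rw [show (2 * Real.pi * Complex.I * (((m : ℤ) * c : ℤ) : ℂ) / m : ℂ)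
          = (c : ℤ) * (2 * Real.pi * Complex.I) by push_cast; field_simp]
      exact Complex.exp_int_mul_two_pi_mul_I c
    rw [if_pos (Dvd.intro c rfl)]
    calc ∑ k ∈ Finset.range m, Complex.exp (2 * Real.pi * Complex.I * ((m : ℤ) * c : ℤ) / m) ^ k
        = ∑ _k ∈ Finset.range m, (1 : ℂ) := by
          refine Finset.sum_congr rfl fun k _ => by rw [h1, one_pow]
      _ = (m : ℂ) := by simp
  · rw [if_neg hdvd]
    have hne : Complex.exp (2 * Real.pi * Complex.I * d / m) ≠ 1 := by
      intro h
      obtain ⟨n, hn⟩ := Complex.exp_eq_one_iff.mp h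
      apply hdvd
      have h2 : (2 * Real.pi * Complex.I : ℂ) ≠ 0 := by
        simp [Real.pi_ne_zero, Complex.I_ne_zero, Complex.ofReal_ne_zero]
      have hdc : (d : ℂ) = ((n * m : ℤ) : ℂ) := by
        push_cast
        apply mul_right_cancel₀ h2
        rw [show (d:ℂ) * (2 * Real.pi * Complex.I) = 2 * Real.pi * Complex.I * d by ring]
        rw [div_eq_iff hm'] at hn
        rw [hn]; ring
      have : d = n * m := by exact_mod_cast hdc
      exact ⟨n, by rw [this]; ring⟩
    rw [geom_sum_eq hne]
    have hpow : Complex.exp (2 * Real.pi * Complex.I * d / m) ^ m = 1 := by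
      rw [← Complex.exp_nat_mul,
        show (m : ℂ) * (2 * Real.pi * Complex.I * d / m) = (d : ℤ) * (2 * Real.pi * Complex.I) by
          push_cast; field_simp]
      exact Complex.exp_int_mul_two_pi_mul_I d
    rw [hpow]
    simp

lemma int_dvd_small (m : ℕ) (hm : 0 < m) (d : ℤ) (h1 : -(2*m) < d) (h2 : d < m) :
    (m:ℤ) ∣ d ↔ (d = 0 ∨ d = -m) := by
  constructor
  · rintro ⟨c, rfl⟩
    have hm' : (0:ℤ) < m := by exact_mod_cast hm
    have hc1 : c < 1 := by
      by_contra h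
      push_neg at h
      nlinarith
    have hc2 : -2 < c := by
      by_contra h
      push_neg at h
      nlinarith
    interval_cases c <;> simp <;> ring_nf <;> omega
  · rintro (rfl | rfl)
    · exact dvd_zero _
    · exact ⟨-1, by ring⟩

lemma fin_eq_iff (m' : ℕ) (s s' : Fin (m'+1)) :
    s = s' ↔ ((m'+1:ℕ):ℤ) ∣ (s:ℤ) - s' := by
  rw [int_dvd_small _ (Nat.succ_pos m') _ (by push_cast; omega) (by push_cast; omega),
    Fin.ext_iff]
  have := s.isLt; have := s'.isLt
  push_cast
  omega

lemma fin_succ_iff (m' : ℕ) (s s' : Fin (m'+1)) :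
    s = s' + 1 ↔ ((m'+1:ℕ):ℤ) ∣ (s:ℤ) - s' - 1 := by
  rw [int_dvd_small _ (Nat.succ_pos m') _ (by push_cast; omega) (by push_cast; omega),
    Fin.ext_iff, Fin.val_add_one]
  have := s.isLt; have := s'.isLt
  by_cases h : s' = Fin.last m'
  · have : (s' : ℕ) = m' := by rw [h]; rfl
    rw [if_pos h]
    push_cast; omega
  · have : (s' : ℕ) ≠ m' := fun hc => h (Fin.ext hc)
    rw [if_neg h]
    push_cast; omega

lemma fin_val_add_one (m' : ℕ) (j : Fin (m'+1)) :
    ((j+1 : Fin (m'+1)) : ℕ) = (j.val + 1) % (m'+1) := by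
  rw [Fin.add_def]
  simp only [Fin.val_one']
  conv_rhs => rw [Nat.add_mod, Nat.mod_eq_of_lt j.isLt]

lemma AoAe_eq (m' : ℕ) (a₁ b₁ a₂ b₂ : ℂ)
    (toNat : Fin (m'+1) × Fin 2 → ℕ) (htoNat : ∀ j, toNat j = 2*(j.1:ℕ) + (j.2:ℕ))
    (Xn : Matrix (Fin (m'+1) × Fin 2) (Fin (m'+1) × Fin 2) ℂ)
    (hXn : ∀ j k, Xn j k = if (toNat j + 1) % (2*(m'+1)) = toNat k then 1 else 0)
    (Ae Ao A : Matrix (Fin (m'+1) × Fin 2) (Fin (m'+1) × Fin 2) ℂ)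
    (hAe : Ae = (1 : Matrix (Fin (m'+1)) (Fin (m'+1)) ℂ)
        ⊗ₖ !![a₁, b₁; -(starRingEnd ℂ b₁), starRingEnd ℂ a₁])
    (hA : A = (1 : Matrix (Fin (m'+1)) (Fin (m'+1)) ℂ)
        ⊗ₖ !![a₂, b₂; -(starRingEnd ℂ b₂), starRingEnd ℂ a₂])
    (hAo : Ao = Xn * A * Xnᴴ) :
    Ao * Ae = Matrix.of fun x y : Fin (m'+1) × Fin 2 =>
      (if x.1 = y.1 then
        (!![starRingEnd ℂ a₂ * a₁, starRingEnd ℂ a₂ * b₁;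
            -(a₂ * starRingEnd ℂ b₁), a₂ * starRingEnd ℂ a₁]) x.2 y.2 else 0)
      + (if x.1 = y.1 + 1 then
        (!![starRingEnd ℂ b₂ * starRingEnd ℂ b₁, -(starRingEnd ℂ b₂ * starRingEnd ℂ a₁);
            0, 0]) x.2 y.2 else 0)
      + (if x.1 + 1 = y.1 then
        (!![0, 0; a₁ * b₂, b₂ * b₁]) x.2 y.2 else 0) := by
  set sc : Fin (m'+1) × Fin 2 → Fin (m'+1) × Fin 2 :=
    fun j => if j.2 = 0 then (j.1, 1) else (j.1 + 1, 0) with hsc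
  have hXn' : ∀ j k, Xn j k = if k = sc j then 1 else 0 := by
    rintro ⟨j1, j2⟩ ⟨k1, k2⟩
    rw [hXn, htoNat, htoNat]
    congr 1
    have hj1 := j1.isLt; have hk1 := k1.isLt
    have hk2 := k2.isLt
    fin_cases j2
    · simp only [hsc]
      norm_num
      rw [Nat.mod_eq_of_lt (by omega)]
      simp only [Fin.ext_iff, Fin.val_one]
      omega
    · simp only [hsc]
      norm_num
      rw [show 2*(j1:ℕ) + 1 + 1 = 2*((j1:ℕ)+1) by ring, Nat.mul_mod_mul_left]
      simp only [Fin.ext_iff, Fin.val_zero, fin_val_add_one]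
      have hmod : ((j1:ℕ)+1) % (m'+1) = if (j1:ℕ)+1 = m'+1 then 0 else (j1:ℕ)+1 := by
        split_ifs with h
        · rw [h, Nat.mod_self]
        · exact Nat.mod_eq_of_lt (by omega)
      rw [hmod]
      split_ifs <;> omega
  have hAo' : ∀ j k, Ao j k = A (sc j) (sc k) := by
    intro j k
    rw [hAo]
    have h1 : ∀ (B : Matrix (Fin (m'+1) × Fin 2) (Fin (m'+1) × Fin 2) ℂ) j k,
        (Xn * B) j k = B (sc j) k := by
      intro B j k
      rw [Matrix.mul_apply]
      simp only [hXn', ite_mul, one_mul, zero_mul]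
      rw [Finset.sum_ite_eq' Finset.univ (sc j) (fun l => B l k)]
      simp
    have h2 : ∀ (B : Matrix (Fin (m'+1) × Fin 2) (Fin (m'+1) × Fin 2) ℂ) j k,
        (B * Xnᴴ) j k = B j (sc k) := by
      intro B j k
      rw [Matrix.mul_apply]
      simp only [Matrix.conjTranspose_apply, hXn', apply_ite (star : ℂ → ℂ), star_one,
        star_zero, mul_ite, mul_one, mul_zero]
      rw [Finset.sum_ite_eq' Finset.univ (sc k) (fun l => B j l)]
      simp
    rw [h2, h1]
  have hAapp : ∀ p1 q1 : Fin (m'+1), ∀ p2 q2 : Fin 2, A (p1, p2) (q1, q2)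
      = (if p1 = q1 then 1 else 0) *
        (!![a₂, b₂; -(starRingEnd ℂ b₂), starRingEnd ℂ a₂]) p2 q2 := by
    intro p1 q1 p2 q2
    rw [hA, Matrix.kroneckerMap_apply, Matrix.one_apply]
  ext ⟨s, p⟩ ⟨s', q⟩
  rw [Matrix.mul_apply]
  rw [Fintype.sum_prod_type]
  have hAeapp : ∀ t1 : Fin (m'+1), ∀ u q2 : Fin 2, Ae (t1, u) (s', q2)
      = (if t1 = s' then 1 else 0) *
        (!![a₁, b₁; -(starRingEnd ℂ b₁), starRingEnd ℂ a₁]) u q2 := by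
    intro t1 u q2
    rw [hAe, Matrix.kroneckerMap_apply, Matrix.one_apply]
  have collapse : ∀ u : Fin 2, ∑ t : Fin (m'+1), Ao (s,p) (t, u) * Ae (t, u) (s', q)
      = Ao (s,p) (s', u) * (!![a₁, b₁; -(starRingEnd ℂ b₁), starRingEnd ℂ a₁]) u q := by
    intro u
    have : ∀ t : Fin (m'+1), Ao (s,p) (t, u) * Ae (t, u) (s', q)
        = if t = s' then Ao (s,p) (t, u)
            * (!![a₁, b₁; -(starRingEnd ℂ b₁), starRingEnd ℂ a₁]) u q else 0 := by
      intro t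
      rw [hAeapp]
      split_ifs <;> ring
    rw [Finset.sum_congr rfl (fun t _ => this t),
      Finset.sum_ite_eq' Finset.univ s' (fun t => Ao (s,p) (t, u)
        * (!![a₁, b₁; -(starRingEnd ℂ b₁), starRingEnd ℂ a₁]) u q)]
    simp
  rw [show (∑ t : Fin (m'+1), ∑ u : Fin 2, Ao (s,p) (t, u) * Ae (t, u) (s', q))
      = ∑ u : Fin 2, ∑ t : Fin (m'+1), Ao (s,p) (t, u) * Ae (t, u) (s', q) from
      Finset.sum_comm]
  rw [Fin.sum_univ_two, collapse 0, collapse 1, hAo', hAo']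
  fin_cases p <;> fin_cases q <;>
    [skip; skip; skip; skip] <;>
    (try simp only [hsc, Matrix.of_apply, Matrix.cons_val', Matrix.cons_val_zero,
      Matrix.cons_val_one, Matrix.head_cons, Matrix.head_fin_const, Matrix.empty_val',
      Matrix.cons_val_fin_one]) <;>
    norm_num <;>
    rw [hAapp, hAapp] <;>
    (try simp only [Matrix.cons_val', Matrix.cons_val_zero, Matrix.cons_val_one,
      Matrix.head_cons, Matrix.head_fin_const, Matrix.empty_val', Matrix.cons_val_fin_one,
      add_left_inj]) <;>
    (try norm_num) <;>
    split_ifs <;>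
    first
      | ring
      | (simp only [Matrix.cons_val', Matrix.cons_val_zero, Matrix.cons_val_one,
          Matrix.head_cons, Matrix.head_fin_const, Matrix.empty_val',
          Matrix.cons_val_fin_one]; ring)

lemma conj_entry (n : ℕ) (F : Matrix (Fin n) (Fin n) ℂ)
    (N : Fin n → Matrix (Fin 2) (Fin 2) ℂ) (s s' : Fin n) (p q : Fin 2) :
    ((F ⊗ₖ (1 : Matrix (Fin 2) (Fin 2) ℂ))
      * (Matrix.of fun x y : Fin n × Fin 2 => if x.1 = y.1 then N x.1 x.2 y.2 else 0)
      * (Fᴴ ⊗ₖ (1 : Matrix (Fin 2) (Fin 2) ℂ))) (s,p) (s',q)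
    = ∑ k : Fin n, F s k * N k p q * (starRingEnd ℂ) (F s' k) := by
  have h1 : ∀ k' : Fin n, ∀ v : Fin 2,
      ((F ⊗ₖ (1 : Matrix (Fin 2) (Fin 2) ℂ))
        * (Matrix.of fun x y : Fin n × Fin 2 => if x.1 = y.1 then N x.1 x.2 y.2 else 0))
        (s,p) (k',v) = F s k' * N k' p v := by
    intro k' v
    rw [Matrix.mul_apply, Fintype.sum_prod_type]
    have : ∀ k : Fin n, ∑ u : Fin 2,
        (F ⊗ₖ (1 : Matrix (Fin 2) (Fin 2) ℂ)) (s,p) (k,u)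
          * (Matrix.of fun x y : Fin n × Fin 2 => if x.1 = y.1 then N x.1 x.2 y.2 else 0)
            (k,u) (k',v)
        = if k = k' then F s k * N k p v else 0 := by
      intro k
      simp only [Matrix.kroneckerMap_apply, Matrix.one_apply, Matrix.of_apply]
      rw [Fin.sum_univ_two]
      fin_cases p <;> simp <;> split_ifs <;> ring
    rw [Finset.sum_congr rfl fun k _ => this k,
      Finset.sum_ite_eq' Finset.univ k' (fun k => F s k * N k p v)]
    simp
  rw [Matrix.mul_apply, Fintype.sum_prod_type]
  have h2 : ∀ k' : Fin n, ∑ v : Fin 2,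
      ((F ⊗ₖ (1 : Matrix (Fin 2) (Fin 2) ℂ))
        * (Matrix.of fun x y : Fin n × Fin 2 => if x.1 = y.1 then N x.1 x.2 y.2 else 0))
        (s,p) (k',v) * (Fᴴ ⊗ₖ (1 : Matrix (Fin 2) (Fin 2) ℂ)) (k',v) (s',q)
      = F s k' * N k' p q * (starRingEnd ℂ) (F s' k') := by
    intro k'
    rw [Fin.sum_univ_two, h1, h1]
    simp only [Matrix.kroneckerMap_apply, Matrix.one_apply, Matrix.conjTranspose_apply]
    fin_cases q <;> simp <;> ring
  exact Finset.sum_congr rfl fun k' _ => h2 k'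

lemma fourier_sum (m' : ℕ) (s s' : Fin (m'+1)) (c0 cm cp : ℂ) :
    ∑ k : Fin (m'+1),
      (Complex.exp (2 * Real.pi * Complex.I * (s:ℕ) * (k:ℕ) / (m'+1:ℕ)) / Real.sqrt (m'+1:ℕ))
      * (c0 + cm * Complex.exp (-(4 * Real.pi * Complex.I * (k:ℕ)) / (2 * (m'+1:ℕ)))
            + cp * Complex.exp (4 * Real.pi * Complex.I * (k:ℕ) / (2 * (m'+1:ℕ))))
      * (starRingEnd ℂ)
          (Complex.exp (2 * Real.pi * Complex.I * (s':ℕ) * (k:ℕ) / (m'+1:ℕ)) / Real.sqrt (m'+1:ℕ))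
    = (if s = s' then c0 else 0) + (if s = s' + 1 then cm else 0)
      + (if s + 1 = s' then cp else 0) := by
  have hn0 : 0 < m' + 1 := Nat.succ_pos m'
  have hnC : ((m'+1:ℕ):ℂ) ≠ 0 := Nat.cast_ne_zero.mpr hn0.ne'
  have h2nC : (2 * ((m'+1:ℕ):ℂ)) ≠ 0 := mul_ne_zero two_ne_zero hnC
  have hsq : ((Real.sqrt (m'+1:ℕ) : ℝ) : ℂ) * ((Real.sqrt (m'+1:ℕ) : ℝ) : ℂ)
      = ((m'+1:ℕ) : ℂ) := by
    rw [← Complex.ofReal_mul, Real.mul_self_sqrt (Nat.cast_nonneg (m'+1))]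
    norm_num
  have hsqne : ((Real.sqrt (m'+1:ℕ) : ℝ) : ℂ) ≠ 0 := by
    intro h
    rw [h, mul_zero] at hsq
    exact hnC hsq.symm
  have key : ∀ k : Fin (m'+1),
      (Complex.exp (2 * Real.pi * Complex.I * (s:ℕ) * (k:ℕ) / (m'+1:ℕ)) / Real.sqrt (m'+1:ℕ))
      * (c0 + cm * Complex.exp (-(4 * Real.pi * Complex.I * (k:ℕ)) / (2 * (m'+1:ℕ)))
            + cp * Complex.exp (4 * Real.pi * Complex.I * (k:ℕ) / (2 * (m'+1:ℕ))))
      * (starRingEnd ℂ)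
          (Complex.exp (2 * Real.pi * Complex.I * (s':ℕ) * (k:ℕ) / (m'+1:ℕ)) / Real.sqrt (m'+1:ℕ))
      = (c0 * Complex.exp (2 * Real.pi * Complex.I * (((s:ℤ) - s' : ℤ) : ℂ) * (k:ℕ) / (m'+1:ℕ))
         + cm * Complex.exp (2 * Real.pi * Complex.I * (((s:ℤ) - s' - 1 : ℤ) : ℂ) * (k:ℕ) / (m'+1:ℕ))
         + cp * Complex.exp (2 * Real.pi * Complex.I * (((s:ℤ) - s' + 1 : ℤ) : ℂ) * (k:ℕ) / (m'+1:ℕ)))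
        / (m'+1:ℕ) := by
    intro k
    have hargm : (-(4 * Real.pi * Complex.I * (k:ℕ)) / (2 * ((m'+1:ℕ):ℂ)))
        = -(2 * Real.pi * Complex.I * (k:ℕ) / ((m'+1:ℕ):ℂ)) := by
      rw [neg_div, neg_inj, div_eq_div_iff h2nC hnC]
      ring
    have hargp : ((4 * Real.pi * Complex.I * (k:ℕ)) / (2 * ((m'+1:ℕ):ℂ)))
        = (2 * Real.pi * Complex.I * (k:ℕ) / ((m'+1:ℕ):ℂ)) := by
      rw [div_eq_div_iff h2nC hnC]
      ring
    have hconj : (starRingEnd ℂ)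
        (Complex.exp (2 * Real.pi * Complex.I * (s':ℕ) * (k:ℕ) / ((m'+1:ℕ):ℂ)) / ((Real.sqrt (m'+1:ℕ) : ℝ) : ℂ))
        = Complex.exp (-(2 * Real.pi * Complex.I * (s':ℕ) * (k:ℕ) / ((m'+1:ℕ):ℂ))) / ((Real.sqrt (m'+1:ℕ) : ℝ) : ℂ) := by
      rw [map_div₀, ← Complex.exp_conj]
      congr 1
      · congr 1
        simp only [map_div₀, _root_.map_mul, Complex.conj_I, Complex.conj_ofReal,
          Complex.conj_natCast, map_ofNat]
        ring
      · exact Complex.conj_ofReal _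
    have E0 : Complex.exp (2 * Real.pi * Complex.I * (((s:ℤ) - s' : ℤ) : ℂ) * (k:ℕ) / (m'+1:ℕ))
        = Complex.exp (2 * Real.pi * Complex.I * (s:ℕ) * (k:ℕ) / ((m'+1:ℕ):ℂ))
          * Complex.exp (-(2 * Real.pi * Complex.I * (s':ℕ) * (k:ℕ) / ((m'+1:ℕ):ℂ))) := by
      rw [← Complex.exp_add]
      congr 1
      push_cast
      ring
    have Em : Complex.exp (2 * Real.pi * Complex.I * (((s:ℤ) - s' - 1 : ℤ) : ℂ) * (k:ℕ) / (m'+1:ℕ))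
        = Complex.exp (2 * Real.pi * Complex.I * (s:ℕ) * (k:ℕ) / ((m'+1:ℕ):ℂ))
          * Complex.exp (-(2 * Real.pi * Complex.I * (k:ℕ) / ((m'+1:ℕ):ℂ)))
          * Complex.exp (-(2 * Real.pi * Complex.I * (s':ℕ) * (k:ℕ) / ((m'+1:ℕ):ℂ))) := by
      rw [← Complex.exp_add, ← Complex.exp_add]
      congr 1
      push_cast
      ring
    have Ep : Complex.exp (2 * Real.pi * Complex.I * (((s:ℤ) - s' + 1 : ℤ) : ℂ) * (k:ℕ) / (m'+1:ℕ))
        = Complex.exp (2 * Real.pi * Complex.I * (s:ℕ) * (k:ℕ) / ((m'+1:ℕ):ℂ))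
          * Complex.exp ((2 * Real.pi * Complex.I * (k:ℕ) / ((m'+1:ℕ):ℂ)))
          * Complex.exp (-(2 * Real.pi * Complex.I * (s':ℕ) * (k:ℕ) / ((m'+1:ℕ):ℂ))) := by
      rw [← Complex.exp_add, ← Complex.exp_add]
      congr 1
      push_cast
      ring
    rw [hargm, hargp, hconj, E0, Em, Ep, ← hsq]
    field_simp
  rw [Finset.sum_congr rfl fun k _ => key k, ← Finset.sum_div, Finset.sum_add_distrib,
    Finset.sum_add_distrib, ← Finset.mul_sum, ← Finset.mul_sum, ← Finset.mul_sum,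
    expsum (m'+1) hn0 ((s:ℤ) - s'), expsum (m'+1) hn0 ((s:ℤ) - s' - 1),
    expsum (m'+1) hn0 ((s:ℤ) - s' + 1)]
  have hiff3 : (s + 1 = s') ↔ ((m'+1:ℕ):ℤ) ∣ ((s:ℤ) - s' + 1) := by
    rw [eq_comm, fin_succ_iff m' s' s,
      show (s':ℤ) - s - 1 = -((s:ℤ) - s' + 1) by ring, dvd_neg]
  rw [show (if s = s' then c0 else 0) = if ((m'+1:ℕ):ℤ) ∣ ((s:ℤ) - s') then c0 else 0 by
      simp only [fin_eq_iff m' s s'],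
    show (if s = s' + 1 then cm else 0) = if ((m'+1:ℕ):ℤ) ∣ ((s:ℤ) - s' - 1) then cm else 0 by
      simp only [fin_succ_iff m' s s'],
    show (if s + 1 = s' then cp else 0) = if ((m'+1:ℕ):ℤ) ∣ ((s:ℤ) - s' + 1) then cp else 0 by
      simp only [hiff3]]
  have hnC' : ((m':ℂ) + 1) ≠ 0 := by exact_mod_cast hnC
  split_ifs <;> (rw [div_eq_iff hnC] <;> ring)

/-- **Fourier block-diagonalization of the fermionic PUQCA step.**
Let `A_e = I_m ⊗ B₁`, `A = I_m ⊗ B₂` with `B_j = [[a_j,b_j],[-b_j*,a_j*]]` unitary,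
`A_o = X_n A X_n†` with `X_n` the cyclic shift on `n = 2m` sites (index `j = 2s+p`),
and `𝔸 = A_o A_e`.  Then with `F_m` the discrete Fourier matrix,
`𝔸^t = (F_m ⊗ I₂) [Σ_k |k⟩⟨k| ⊗ M(k)^t] (F_m† ⊗ I₂)` where
`M(k) = [[a₂*a₁ + b₂*b₁*e^{-4πik/n}, a₂*b₁ - b₂*a₁*e^{-4πik/n}],
[a₁b₂e^{4πik/n} - a₂b₁*, b₂b₁e^{4πik/n} + a₂a₁*]]`. -/
theorem fourier_block_diagonalization_of_puqca (m : ℕ) (a₁ b₁ a₂ b₂ : ℂ)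
    (hunit₁ : ‖a₁‖ ^ 2 + ‖b₁‖ ^ 2 = 1) (hunit₂ : ‖a₂‖ ^ 2 + ‖b₂‖ ^ 2 = 1)
    (toNat : Fin m × Fin 2 → ℕ) (htoNat : ∀ j, toNat j = 2 * (j.1 : ℕ) + (j.2 : ℕ))
    (Xn : Matrix (Fin m × Fin 2) (Fin m × Fin 2) ℂ)
    (hXn : ∀ j k, Xn j k = if (toNat j + 1) % (2 * m) = toNat k then 1 else 0)
    (Ae Ao A : Matrix (Fin m × Fin 2) (Fin m × Fin 2) ℂ)
    (hAe : Ae = (1 : Matrix (Fin m) (Fin m) ℂ)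
        ⊗ₖ !![a₁, b₁; -(starRingEnd ℂ b₁), starRingEnd ℂ a₁])
    (hA : A = (1 : Matrix (Fin m) (Fin m) ℂ)
        ⊗ₖ !![a₂, b₂; -(starRingEnd ℂ b₂), starRingEnd ℂ a₂])
    (hAo : Ao = Xn * A * Xnᴴ)
    (F : Matrix (Fin m) (Fin m) ℂ)
    (hF : ∀ j k, F j k =
      Complex.exp (2 * Real.pi * Complex.I * (j : ℕ) * (k : ℕ) / m) / Real.sqrt m)
    (M : Fin m → Matrix (Fin 2) (Fin 2) ℂ)
    (hM : ∀ k, M k =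
      !![starRingEnd ℂ a₂ * a₁ + starRingEnd ℂ b₂ * starRingEnd ℂ b₁
            * Complex.exp (-(4 * Real.pi * Complex.I * (k : ℕ)) / (2 * m)),
         starRingEnd ℂ a₂ * b₁ - starRingEnd ℂ b₂ * starRingEnd ℂ a₁
            * Complex.exp (-(4 * Real.pi * Complex.I * (k : ℕ)) / (2 * m));
         a₁ * b₂ * Complex.exp (4 * Real.pi * Complex.I * (k : ℕ) / (2 * m))
            - a₂ * starRingEnd ℂ b₁,
         b₂ * b₁ * Complex.exp (4 * Real.pi * Complex.I * (k : ℕ) / (2 * m))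
            + a₂ * starRingEnd ℂ a₁])
    (t : ℕ) :
    (Ao * Ae) ^ t
      = (F ⊗ₖ (1 : Matrix (Fin 2) (Fin 2) ℂ))
        * (Matrix.of fun (x y : Fin m × Fin 2) =>
            if x.1 = y.1 then ((M x.1) ^ t) x.2 y.2 else 0)
        * (Fᴴ ⊗ₖ (1 : Matrix (Fin 2) (Fin 2) ℂ)) := by
  rcases m with _ | m'
  · ext x y
    exact x.1.elim0
  · have hFunit : F * Fᴴ = 1 := by
      ext s s'
      rw [Matrix.mul_apply, Matrix.one_apply]
      have h := fourier_sum m' s s' 1 0 0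
      simp only [zero_mul, add_zero, mul_one, if_pos, one_ne_zero] at h
      calc ∑ k, F s k * Fᴴ k s'
          = ∑ k : Fin (m'+1),
            (Complex.exp (2 * Real.pi * Complex.I * (s:ℕ) * (k:ℕ) / (m'+1:ℕ)) / Real.sqrt (m'+1:ℕ))
            * (1 + 0 * Complex.exp (-(4 * Real.pi * Complex.I * (k:ℕ)) / (2 * (m'+1:ℕ)))
                  + 0 * Complex.exp (4 * Real.pi * Complex.I * (k:ℕ) / (2 * (m'+1:ℕ))))
            * (starRingEnd ℂ)
                (Complex.exp (2 * Real.pi * Complex.I * (s':ℕ) * (k:ℕ) / (m'+1:ℕ)) / Real.sqrt (m'+1:ℕ)) := by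
            refine Finset.sum_congr rfl fun k _ => ?_
            rw [Matrix.conjTranspose_apply, hF, hF]
            push_cast
            ring_nf
            rfl
        _ = (if s = s' then 1 else 0) + (if s = s' + 1 then 0 else 0)
            + (if s + 1 = s' then 0 else 0) := fourier_sum m' s s' 1 0 0
        _ = if s = s' then 1 else 0 := by split_ifs <;> ring
    have hFunit' : Fᴴ * F = 1 := mul_eq_one_comm.mp hFunit
    have hKunit : (F ⊗ₖ (1 : Matrix (Fin 2) (Fin 2) ℂ)) * (Fᴴ ⊗ₖ (1 : Matrix (Fin 2) (Fin 2) ℂ)) = 1 := by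
      rw [← Matrix.mul_kronecker_mul, hFunit, Matrix.mul_one, Matrix.one_kronecker_one]
    have hKunit' : (Fᴴ ⊗ₖ (1 : Matrix (Fin 2) (Fin 2) ℂ)) * (F ⊗ₖ (1 : Matrix (Fin 2) (Fin 2) ℂ)) = 1 := by
      rw [← Matrix.mul_kronecker_mul, hFunit', Matrix.mul_one, Matrix.one_kronecker_one]
    set D : ℕ → Matrix (Fin (m'+1) × Fin 2) (Fin (m'+1) × Fin 2) ℂ :=
      fun t => Matrix.of fun x y : Fin (m'+1) × Fin 2 =>
        if x.1 = y.1 then ((M x.1) ^ t) x.2 y.2 else 0 with hDdef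
    show (Ao * Ae) ^ t = (F ⊗ₖ (1 : Matrix (Fin 2) (Fin 2) ℂ)) * D t
      * (Fᴴ ⊗ₖ (1 : Matrix (Fin 2) (Fin 2) ℂ))
    have hD0 : D 0 = 1 := by
      ext ⟨s, p⟩ ⟨s', q⟩
      simp only [hDdef, Matrix.of_apply, pow_zero, Matrix.one_apply, Prod.ext_iff]
      by_cases h1 : s = s' <;> by_cases h2 : p = q <;> simp [h1, h2]
    have hDmul : ∀ u, D u * D 1 = D (u + 1) := by
      intro u
      ext ⟨s, p⟩ ⟨s', q⟩
      rw [Matrix.mul_apply, Fintype.sum_prod_type]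
      have hr : ∀ r : Fin (m'+1), (∑ v : Fin 2, D u (s,p) (r,v) * D 1 (r,v) (s',q))
          = if r = s then (∑ v : Fin 2, ((M s) ^ u) p v * D 1 (s,v) (s',q)) else 0 := by
        intro r
        rcases eq_or_ne r s with rfl | hrs
        · simp [hDdef]
        · simp [hDdef, hrs, Ne.symm hrs]
      rw [Finset.sum_congr rfl fun r _ => hr r,
        Finset.sum_ite_eq' Finset.univ s
          (fun _ => ∑ v : Fin 2, ((M s) ^ u) p v * D 1 (s,v) (s',q))]
      simp only [Finset.mem_univ, if_true]
      rcases eq_or_ne s s' with rfl | hss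
      · simp only [hDdef, Matrix.of_apply, pow_one]
        rw [pow_succ, Matrix.mul_apply]
        simp
      · simp [hDdef, hss]
    have hbase : Ao * Ae = (F ⊗ₖ (1 : Matrix (Fin 2) (Fin 2) ℂ)) * D 1
        * (Fᴴ ⊗ₖ (1 : Matrix (Fin 2) (Fin 2) ℂ)) := by
      have hD1 : D 1 = Matrix.of fun x y : Fin (m'+1) × Fin 2 =>
          if x.1 = y.1 then M x.1 x.2 y.2 else 0 := by
        ext ⟨s, p⟩ ⟨s', q⟩
        simp [hDdef, pow_one]
      rw [AoAe_eq m' a₁ b₁ a₂ b₂ toNat htoNat Xn hXn Ae Ao A hAe hA hAo, hD1]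
      ext ⟨s, p⟩ ⟨s', q⟩
      rw [show ((F ⊗ₖ (1 : Matrix (Fin 2) (Fin 2) ℂ))
          * (Matrix.of fun x y : Fin (m'+1) × Fin 2 => if x.1 = y.1 then M x.1 x.2 y.2 else 0)
          * (Fᴴ ⊗ₖ (1 : Matrix (Fin 2) (Fin 2) ℂ))) (s, p) (s', q)
          = ∑ k : Fin (m'+1), F s k * M k p q * (starRingEnd ℂ) (F s' k) from
        conj_entry (m'+1) F M s s' p q]
      have hsum : ∀ c0 cm cp : ℂ, (∀ k : Fin (m'+1), M k p q
          = c0 + cm * Complex.exp (-(4 * Real.pi * Complex.I * (k:ℕ)) / (2 * ((m'+1:ℕ) : ℂ)))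
              + cp * Complex.exp (4 * Real.pi * Complex.I * (k:ℕ) / (2 * ((m'+1:ℕ) : ℂ)))) →
          ∑ k : Fin (m'+1), F s k * M k p q * (starRingEnd ℂ) (F s' k)
          = (if s = s' then c0 else 0) + (if s = s' + 1 then cm else 0)
            + (if s + 1 = s' then cp else 0) := by
        intro c0 cm cp hMk
        rw [← fourier_sum m' s s' c0 cm cp]
        refine Finset.sum_congr rfl fun k _ => ?_
        rw [hF, hF, hMk k]
      fin_cases p <;> fin_cases q <;> simp only [Matrix.of_apply] <;> norm_num
      · exact ((hsum (starRingEnd ℂ a₂ * a₁) (starRingEnd ℂ b₂ * starRingEnd ℂ b₁) 0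
          (fun k => by rw [hM k]; norm_num)).trans (by split_ifs <;> ring)).symm
      · exact ((hsum (starRingEnd ℂ a₂ * b₁) (-(starRingEnd ℂ b₂ * starRingEnd ℂ a₁)) 0
          (fun k => by rw [hM k]; norm_num; ring)).trans (by split_ifs <;> ring)).symm
      · exact ((hsum (-(a₂ * starRingEnd ℂ b₁)) 0 (a₁ * b₂)
          (fun k => by rw [hM k]; norm_num; ring)).trans (by split_ifs <;> ring)).symm
      · exact ((hsum (a₂ * starRingEnd ℂ a₁) 0 (b₂ * b₁)
          (fun k => by rw [hM k]; norm_num; ring)).trans (by split_ifs <;> ring)).symm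
    clear hM hF hAe hA hAo hXn htoNat hunit₁ hunit₂
    induction t with
    | zero =>
      rw [pow_zero, hD0, Matrix.mul_one, hKunit]
    | succ u ih =>
      rw [pow_succ, ih, hbase]
      calc (F ⊗ₖ (1 : Matrix (Fin 2) (Fin 2) ℂ)) * D u * (Fᴴ ⊗ₖ (1 : Matrix (Fin 2) (Fin 2) ℂ))
            * ((F ⊗ₖ (1 : Matrix (Fin 2) (Fin 2) ℂ)) * D 1 * (Fᴴ ⊗ₖ (1 : Matrix (Fin 2) (Fin 2) ℂ)))
          = (F ⊗ₖ (1 : Matrix (Fin 2) (Fin 2) ℂ)) * (D u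
            * (((Fᴴ ⊗ₖ (1 : Matrix (Fin 2) (Fin 2) ℂ)) * ((F ⊗ₖ (1 : Matrix (Fin 2) (Fin 2) ℂ))))
            * (D 1 * (Fᴴ ⊗ₖ (1 : Matrix (Fin 2) (Fin 2) ℂ))))) := by
            simp only [Matrix.mul_assoc]
        _ = (F ⊗ₖ (1 : Matrix (Fin 2) (Fin 2) ℂ)) * (D u * (D 1
            * (Fᴴ ⊗ₖ (1 : Matrix (Fin 2) (Fin 2) ℂ)))) := by
            rw [hKunit', Matrix.one_mul]
        _ = (F ⊗ₖ (1 : Matrix (Fin 2) (Fin 2) ℂ)) * (D u * D 1)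
            * (Fᴴ ⊗ₖ (1 : Matrix (Fin 2) (Fin 2) ℂ)) := by
            simp only [Matrix.mul_assoc]
        _ = (F ⊗ₖ (1 : Matrix (Fin 2) (Fin 2) ℂ)) * D (u + 1)
            * (Fᴴ ⊗ₖ (1 : Matrix (Fin 2) (Fin 2) ℂ)) := by rw [hDmul u]
end
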